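/- Let G be a finite commutative group and π a pairing on G. Let A = MonoidAlgebra ℂ G and let R̊ ∈ A ⊗[ℂ] A be the element R̊ = |G|⁻¹ • Σ_{g,h ∈ G} ((π g h)⁻¹ : ℂ) • (g ⊗ₜ h). Let X = {x ∈ G | x² = 1}. Then, in the algebra A ⊗[ℂ] A, R̊ · R̊ = (|G| · |X|)⁻¹ • Σ_{e,f ∈ G} ((π e (f²))⁻¹ : ℂ) • (e² ⊗ₜ f²). (This is the paper's formula R̊² = |2G|⁻¹ Σ_{c,d ∈ 2G} π₂(c,d)⁻¹ c ⊗ d, where 2G = {g² : g ∈ G} and π₂(c,d) = π(e,d) for any e with e² = c; in particular R̊² lies in ℂ[2G] ⊗ ℂ[2G].) -/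

import Mathlib

open scoped TensorProduct

/-- The element `R̊ = |G|⁻¹ ∑_{g,h} π(g,h)⁻¹ g ⊗ h` of `ℂ[G] ⊗ ℂ[G]`. -/
noncomputable def Rcirc (G : Type*) [CommGroup G] [Fintype G] (π : G → G → ℂˣ) :
    MonoidAlgebra ℂ G ⊗[ℂ] MonoidAlgebra ℂ G :=
  (Fintype.card G : ℂ)⁻¹ •
    ∑ g : G, ∑ h : G, ((π g h : ℂ))⁻¹ •
      (MonoidAlgebra.single g (1 : ℂ) ⊗ₜ[ℂ] MonoidAlgebra.single h (1 : ℂ))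

section aux
variable {G : Type*} [CommGroup G] [Fintype G] [DecidableEq G] (π : G → G → ℂˣ)

lemma Rc.pi_one_left (hmul_left : ∀ g h k : G, π (g * h) k = π g k * π h k) (k : G) :
    π 1 k = 1 := by
  have := hmul_left 1 1 k
  rw [one_mul] at this
  exact (right_eq_mul.mp this)

lemma Rc.pi_inv_left (hmul_left : ∀ g h k : G, π (g * h) k = π g k * π h k) (g k : G) :
    ((π g⁻¹ k : ℂ)) = ((π g k : ℂ))⁻¹ := by
  have h1 : π g⁻¹ k * π g k = 1 := by
    rw [← hmul_left, inv_mul_cancel, Rc.pi_one_left π hmul_left]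
  have h2 : ((π g⁻¹ k : ℂ)) * ((π g k : ℂ)) = 1 := by
    have := congrArg (Units.val) h1; push_cast at this; exact this
  exact eq_inv_of_mul_eq_one_left h2

lemma Rc.pi_one_right (hmul_right : ∀ g h k : G, π g (h * k) = π g h * π g k) (g : G) :
    π g 1 = 1 := by
  have := hmul_right g 1 1
  rw [one_mul] at this
  exact (right_eq_mul.mp this)

lemma Rc.pi_inv_right (hmul_right : ∀ g h k : G, π g (h * k) = π g h * π g k) (g k : G) :
    ((π g k⁻¹ : ℂ)) = ((π g k : ℂ))⁻¹ := by
  have h1 : π g k⁻¹ * π g k = 1 := by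
    rw [← hmul_right, inv_mul_cancel, Rc.pi_one_right π hmul_right]
  have h2 : ((π g k⁻¹ : ℂ)) * ((π g k : ℂ)) = 1 := by
    have := congrArg (Units.val) h1; push_cast at this; exact this
  exact eq_inv_of_mul_eq_one_left h2

lemma Rc.sum_pi_eq (hmul_left : ∀ g h k : G, π (g * h) k = π g k * π h k)
    (hmul_right : ∀ g h k : G, π g (h * k) = π g h * π g k)
    (hnondeg : ∀ g : G, (∀ h : G, π g h = 1) → g = 1) (a : G) :
    ∑ k : G, ((π a k : ℂ)) = if a = 1 then (Fintype.card G : ℂ) else 0 := by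
  split_ifs with ha
  · subst ha
    simp [Rc.pi_one_left π hmul_left, Finset.card_univ]
  · obtain ⟨k₀, hk₀⟩ : ∃ k₀, π a k₀ ≠ 1 := by
      by_contra h
      push_neg at h
      exact ha (hnondeg a h)
    have hshift : ∑ k : G, ((π a k : ℂ)) = ∑ k : G, ((π a (k₀ * k) : ℂ)) :=
      (Fintype.sum_equiv (Equiv.mulLeft k₀) _ _ (fun k => rfl)).symm
    have key : (((π a k₀ : ℂ)) - 1) * ∑ k : G, ((π a k : ℂ)) = 0 := by
      have : ((π a k₀ : ℂ)) * ∑ k : G, ((π a k : ℂ)) = ∑ k : G, ((π a k : ℂ)) := by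
        rw [Finset.mul_sum, hshift]
        apply Finset.sum_congr rfl
        intro k _
        rw [hmul_right]; push_cast; ring
      linear_combination this
    rcases mul_eq_zero.mp key with h | h
    · exfalso; apply hk₀; ext; simpa using sub_eq_zero.mp h
    · exact h

lemma Rc.sumX_zero_of_exists (hmul_left : ∀ g h k : G, π (g * h) k = π g k * π h k)
    (k : G) (x₀ : G) (hx₀ : x₀ ^ 2 = 1) (hne : π x₀ k ≠ 1) :
    ∑ x ∈ Finset.univ.filter (fun x : G => x ^ 2 = 1), ((π x k : ℂ)) = 0 := by
  have hx₀' : x₀ * x₀ = 1 := by rw [← sq]; exact hx₀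
  have hshift : ∑ x ∈ Finset.univ.filter (fun x : G => x ^ 2 = 1), ((π x k : ℂ))
      = ∑ x ∈ Finset.univ.filter (fun x : G => x ^ 2 = 1), ((π (x₀ * x) k : ℂ)) := by
    apply Finset.sum_nbij' (fun x => x₀ * x) (fun x => x₀ * x)
    · intro a ha
      simp only [Finset.mem_filter, Finset.mem_univ, true_and] at ha ⊢
      rw [mul_pow, hx₀, ha, one_mul]
    · intro a ha
      simp only [Finset.mem_filter, Finset.mem_univ, true_and] at ha ⊢
      rw [mul_pow, hx₀, ha, one_mul]
    · intro a _; rw [← mul_assoc, hx₀', one_mul]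
    · intro a _; rw [← mul_assoc, hx₀', one_mul]
    · intro a _
      simp only [← mul_assoc, hx₀', one_mul]
  have key : (((π x₀ k : ℂ)) - 1)
      * ∑ x ∈ Finset.univ.filter (fun x : G => x ^ 2 = 1), ((π x k : ℂ)) = 0 := by
    have : ((π x₀ k : ℂ)) * ∑ x ∈ Finset.univ.filter (fun x : G => x ^ 2 = 1), ((π x k : ℂ))
        = ∑ x ∈ Finset.univ.filter (fun x : G => x ^ 2 = 1), ((π x k : ℂ)) := by
      rw [Finset.mul_sum, hshift]
      apply Finset.sum_congr rfl
      intro x _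
      rw [hmul_left]; push_cast; ring
    linear_combination this
  rcases mul_eq_zero.mp key with h | h
  · exfalso; apply hne; ext; simpa using sub_eq_zero.mp h
  · exact h

lemma Rc.card_fiber_sq (c : G) (e₀ : G) (he₀ : e₀ ^ 2 = c) :
    (Finset.univ.filter (fun g : G => g ^ 2 = c)).card
      = (Finset.univ.filter (fun x : G => x ^ 2 = 1)).card := by
  apply Finset.card_bij' (fun g _ => e₀⁻¹ * g) (fun x _ => e₀ * x)
  · intro a ha
    simp only [Finset.mem_filter, Finset.mem_univ, true_and] at ha ⊢
    rw [mul_pow, ha, ← he₀, inv_pow, inv_mul_cancel]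
  · intro a ha
    simp only [Finset.mem_filter, Finset.mem_univ, true_and] at ha ⊢
    rw [mul_pow, he₀, ha, mul_one]
  · intro a _; rw [← mul_assoc, mul_inv_cancel, one_mul]
  · intro a _; rw [← mul_assoc, inv_mul_cancel, one_mul]

lemma Rc.card_img_mul :
    (Finset.univ.image (fun g : G => g ^ 2)).card
      * (Finset.univ.filter (fun x : G => x ^ 2 = 1)).card = Fintype.card G := by
  have h := Finset.card_eq_sum_card_fiberwise
    (f := fun g : G => g ^ 2) (s := Finset.univ) (t := Finset.univ.image (fun g : G => g ^ 2))
    (fun x _ => Finset.mem_image_of_mem _ (Finset.mem_univ x))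
  rw [Finset.card_univ] at h
  rw [h]
  rw [Finset.sum_congr rfl (fun c hc => ?_), Finset.sum_const, smul_eq_mul]
  obtain ⟨e₀, _, he₀⟩ := Finset.mem_image.mp hc
  exact Rc.card_fiber_sq c e₀ he₀

lemma Rc.card_ann_mul (hmul_left : ∀ g h k : G, π (g * h) k = π g k * π h k)
    (hmul_right : ∀ g h k : G, π g (h * k) = π g h * π g k)
    (hnondeg : ∀ g : G, (∀ h : G, π g h = 1) → g = 1) :
    (Finset.univ.filter (fun k : G => ∀ x : G, x ^ 2 = 1 → π x k = 1)).card
      * (Finset.univ.filter (fun x : G => x ^ 2 = 1)).card = Fintype.card G := by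
  classical
  have hC : ((Finset.univ.filter (fun k : G => ∀ x : G, x ^ 2 = 1 → π x k = 1)).card : ℂ)
      * ((Finset.univ.filter (fun x : G => x ^ 2 = 1)).card : ℂ) = (Fintype.card G : ℂ) := by
    have hS : ∑ x ∈ Finset.univ.filter (fun x : G => x ^ 2 = 1), ∑ k : G, ((π x k : ℂ))
        = (Fintype.card G : ℂ) := by
      rw [Finset.sum_congr rfl
        (fun x _ => Rc.sum_pi_eq π hmul_left hmul_right hnondeg x), Finset.sum_ite_eq']
      simp
    rw [Finset.sum_comm] at hS
    rw [← hS]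
    rw [← Finset.sum_filter_add_sum_filter_not Finset.univ
      (fun k : G => ∀ x : G, x ^ 2 = 1 → π x k = 1)]
    have h1 : ∀ k ∈ Finset.univ.filter (fun k : G => ∀ x : G, x ^ 2 = 1 → π x k = 1),
        ∑ x ∈ Finset.univ.filter (fun x : G => x ^ 2 = 1), ((π x k : ℂ))
          = ((Finset.univ.filter (fun x : G => x ^ 2 = 1)).card : ℂ) := by
      intro k hk
      simp only [Finset.mem_filter, Finset.mem_univ, true_and] at hk
      have : ∀ x ∈ Finset.univ.filter (fun x : G => x ^ 2 = 1), ((π x k : ℂ)) = 1 := by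
        intro x hx
        simp only [Finset.mem_filter, Finset.mem_univ, true_and] at hx
        rw [hk x hx]; norm_num
      rw [Finset.sum_congr rfl this, Finset.sum_const, nsmul_eq_mul, mul_one]
    have h2 : ∀ k ∈ Finset.univ.filter (fun k : G => ¬ ∀ x : G, x ^ 2 = 1 → π x k = 1),
        ∑ x ∈ Finset.univ.filter (fun x : G => x ^ 2 = 1), ((π x k : ℂ)) = 0 := by
      intro k hk
      simp only [Finset.mem_filter, Finset.mem_univ, true_and] at hk
      push_neg at hk
      obtain ⟨x₀, hx₀, hne⟩ := hk
      exact Rc.sumX_zero_of_exists π hmul_left k x₀ hx₀ hne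
    rw [Finset.sum_congr rfl h1, Finset.sum_congr rfl h2, Finset.sum_const, nsmul_eq_mul,
      Finset.sum_const_zero, add_zero, mul_comm]
  exact_mod_cast hC

lemma Rc.img_subset_ann (hmul_left : ∀ g h k : G, π (g * h) k = π g k * π h k)
    (hmul_right : ∀ g h k : G, π g (h * k) = π g h * π g k) :
    Finset.univ.image (fun g : G => g ^ 2)
      ⊆ Finset.univ.filter (fun k : G => ∀ x : G, x ^ 2 = 1 → π x k = 1) := by
  intro k hk
  obtain ⟨m, _, hm⟩ := Finset.mem_image.mp hk
  simp only [Finset.mem_filter, Finset.mem_univ, true_and]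
  intro x hx
  rw [← hm, sq, hmul_right, ← hmul_left, ← sq, hx, Rc.pi_one_left π hmul_left]

lemma Rc.ann_eq_img (hmul_left : ∀ g h k : G, π (g * h) k = π g k * π h k)
    (hmul_right : ∀ g h k : G, π g (h * k) = π g h * π g k)
    (hnondeg : ∀ g : G, (∀ h : G, π g h = 1) → g = 1) :
    Finset.univ.image (fun g : G => g ^ 2)
      = Finset.univ.filter (fun k : G => ∀ x : G, x ^ 2 = 1 → π x k = 1) := by
  apply Finset.eq_of_subset_of_card_le (Rc.img_subset_ann π hmul_left hmul_right)
  have hX : 0 < (Finset.univ.filter (fun x : G => x ^ 2 = 1)).card :=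
    Finset.card_pos.mpr ⟨1, by simp⟩
  exact le_of_eq (Nat.eq_of_mul_eq_mul_right hX
    ((Rc.card_ann_mul π hmul_left hmul_right hnondeg).trans (Rc.card_img_mul).symm))

/-- For `k` not a square, the `X`-character sum vanishes. -/
lemma Rc.sumX_zero (hmul_left : ∀ g h k : G, π (g * h) k = π g k * π h k)
    (hmul_right : ∀ g h k : G, π g (h * k) = π g h * π g k)
    (hnondeg : ∀ g : G, (∀ h : G, π g h = 1) → g = 1)
    (k : G) (hk : k ∉ Finset.univ.image (fun g : G => g ^ 2)) :
    ∑ x ∈ Finset.univ.filter (fun x : G => x ^ 2 = 1), ((π x k : ℂ)) = 0 := by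
  rw [Rc.ann_eq_img π hmul_left hmul_right hnondeg] at hk
  simp only [Finset.mem_filter, Finset.mem_univ, true_and] at hk
  push_neg at hk
  obtain ⟨x₀, hx₀, hne⟩ := hk
  exact Rc.sumX_zero_of_exists π hmul_left k x₀ hx₀ hne

/-- For `k` not a square, the fiber-sum of `π(·,k)⁻¹` over any square-fiber vanishes. -/
lemma Rc.fiber_sum_zero (hmul_left : ∀ g h k : G, π (g * h) k = π g k * π h k)
    (hmul_right : ∀ g h k : G, π g (h * k) = π g h * π g k)
    (hnondeg : ∀ g : G, (∀ h : G, π g h = 1) → g = 1)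
    (k : G) (hk : k ∉ Finset.univ.image (fun g : G => g ^ 2)) (c : G) :
    ∑ g ∈ Finset.univ.filter (fun g : G => g ^ 2 = c), ((π g k : ℂ))⁻¹ = 0 := by
  rcases Finset.eq_empty_or_nonempty (Finset.univ.filter (fun g : G => g ^ 2 = c)) with he | he
  · rw [he, Finset.sum_empty]
  · obtain ⟨e₀, he₀⟩ := he
    simp only [Finset.mem_filter, Finset.mem_univ, true_and] at he₀
    have hbij : ∑ g ∈ Finset.univ.filter (fun g : G => g ^ 2 = c), ((π g k : ℂ))⁻¹
        = ∑ x ∈ Finset.univ.filter (fun x : G => x ^ 2 = 1), ((π (e₀ * x) k : ℂ))⁻¹ := by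
      apply Finset.sum_nbij' (fun g => e₀⁻¹ * g) (fun x => e₀ * x)
      · intro a ha
        simp only [Finset.mem_filter, Finset.mem_univ, true_and] at ha ⊢
        rw [mul_pow, ha, ← he₀, inv_pow, inv_mul_cancel]
      · intro a ha
        simp only [Finset.mem_filter, Finset.mem_univ, true_and] at ha ⊢
        rw [mul_pow, he₀, ha, mul_one]
      · intro a _; rw [← mul_assoc, mul_inv_cancel, one_mul]
      · intro a _; rw [← mul_assoc, inv_mul_cancel, one_mul]
      · intro a _; rw [← mul_assoc, mul_inv_cancel, one_mul]
    rw [hbij]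
    have : ∀ x ∈ Finset.univ.filter (fun x : G => x ^ 2 = 1),
        ((π (e₀ * x) k : ℂ))⁻¹ = ((π e₀ k : ℂ))⁻¹ * ((π x k : ℂ)) := by
      intro x hx
      simp only [Finset.mem_filter, Finset.mem_univ, true_and] at hx
      have hxx : ((π x k : ℂ))⁻¹ = ((π x k : ℂ)) := by
        rw [← Rc.pi_inv_left π hmul_left, inv_eq_of_mul_eq_one_right (by rw [← sq]; exact hx)]
      rw [hmul_left]
      push_cast
      rw [mul_inv, hxx]
    rw [Finset.sum_congr rfl this, ← Finset.mul_sum,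
      Rc.sumX_zero π hmul_left hmul_right hnondeg k hk, mul_zero]

end aux

/-- `R̊² = (|G|·|X|)⁻¹ ∑_{e,f} π(e,f²)⁻¹ e² ⊗ f²` where `X = {x ∈ G | x² = 1}`;
i.e. `R̊² = |2G|⁻¹ ∑_{c,d ∈ 2G} π₂(c,d)⁻¹ c ⊗ d`, which lies in `ℂ[2G] ⊗ ℂ[2G]`. -/
theorem stmt_3 {G : Type*} [CommGroup G] [Fintype G] [DecidableEq G]
    (π : G → G → ℂˣ)
    (hmul_left : ∀ g h k : G, π (g * h) k = π g k * π h k)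
    (hmul_right : ∀ g h k : G, π g (h * k) = π g h * π g k)
    (hsymm : ∀ g h : G, π g h = π h g)
    (hnondeg : ∀ g : G, (∀ h : G, π g h = 1) → g = 1) :
    Rcirc G π * Rcirc G π =
      ((Fintype.card G : ℂ) * ((Finset.univ.filter (fun x : G => x ^ 2 = 1)).card : ℂ))⁻¹ •
        ∑ e : G, ∑ f : G, ((π e (f ^ 2) : ℂ))⁻¹ •
          (MonoidAlgebra.single (e ^ 2) (1 : ℂ) ⊗ₜ[ℂ] MonoidAlgebra.single (f ^ 2) (1 : ℂ)) := by
  classical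
  set N : ℂ := (Fintype.card G : ℂ) with hN
  set M : ℂ := ((Finset.univ.filter (fun x : G => x ^ 2 = 1)).card : ℂ) with hM
  have hN0 : N ≠ 0 := by
    simp [hN, Fintype.card_ne_zero]
  have hM0 : M ≠ 0 := by
    have : 0 < (Finset.univ.filter (fun x : G => x ^ 2 = 1)).card :=
      Finset.card_pos.mpr ⟨1, by simp⟩
    simp only [hM]
    exact_mod_cast this.ne'
  set s : G → G → MonoidAlgebra ℂ G ⊗[ℂ] MonoidAlgebra ℂ G :=
    fun g h => (MonoidAlgebra.single g (1 : ℂ) ⊗ₜ[ℂ] MonoidAlgebra.single h (1 : ℂ)) with hs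
  -- Step 1: expand the product
  have e1 : Rcirc G π * Rcirc G π
      = (N⁻¹ * N⁻¹) • ∑ g : G, ∑ g' : G, ∑ h : G, ∑ h' : G,
          (((π g h : ℂ))⁻¹ * ((π g' h' : ℂ))⁻¹) • s (g * g') (h * h') := by
    rw [Rcirc, smul_mul_assoc, mul_smul_comm, smul_smul]
    congr 1
    rw [Finset.sum_mul_sum]
    apply Finset.sum_congr rfl; intro g _
    apply Finset.sum_congr rfl; intro g' _
    rw [Finset.sum_mul_sum]
    apply Finset.sum_congr rfl; intro h _
    apply Finset.sum_congr rfl; intro h' _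
    rw [smul_mul_assoc, mul_smul_comm, smul_smul, hs]
    simp only [Algebra.TensorProduct.tmul_mul_tmul, MonoidAlgebra.single_mul_single, mul_one]
  -- Step 2: reindex h' ↦ h⁻¹ * k and collapse the h-sum
  have e2 : ∀ g g' : G, ∑ h : G, ∑ h' : G,
      (((π g h : ℂ))⁻¹ * ((π g' h' : ℂ))⁻¹) • s (g * g') (h * h')
      = ∑ k : G, ((if g⁻¹ * g' = 1 then N else 0) * ((π g' k : ℂ))⁻¹) • s (g * g') k := by
    intro g g'
    have step : ∀ h : G, ∑ h' : G,
        (((π g h : ℂ))⁻¹ * ((π g' h' : ℂ))⁻¹) • s (g * g') (h * h')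
        = ∑ k : G, (((π (g⁻¹ * g') h : ℂ)) * ((π g' k : ℂ))⁻¹) • s (g * g') k := by
      intro h
      rw [← Equiv.sum_comp (Equiv.mulLeft h⁻¹)
        (fun k => (((π g h : ℂ))⁻¹ * ((π g' k : ℂ))⁻¹) • s (g * g') (h * k))]
      apply Finset.sum_congr rfl
      intro k _
      have h1 : h * ((Equiv.mulLeft h⁻¹) k) = k := by
        simp [Equiv.mulLeft]
      have h2 : ((π g' ((Equiv.mulLeft h⁻¹) k) : ℂ))⁻¹
          = ((π g' h : ℂ)) * ((π g' k : ℂ))⁻¹ := by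
        show ((π g' (h⁻¹ * k) : ℂ))⁻¹ = _
        rw [hmul_right]
        push_cast
        rw [mul_inv, Rc.pi_inv_right π hmul_right, inv_inv]
      rw [h1, h2]
      congr 1
      rw [hmul_left]
      push_cast
      rw [Rc.pi_inv_left π hmul_left]
      ring
    rw [Finset.sum_congr rfl (fun h _ => step h), Finset.sum_comm]
    apply Finset.sum_congr rfl
    intro k _
    rw [← Finset.sum_smul, ← Finset.sum_mul,
      Rc.sum_pi_eq π hmul_left hmul_right hnondeg (g⁻¹ * g')]
  -- Step 3: collapse the g'-sum
  have e3 : ∑ g : G, ∑ g' : G, ∑ k : G,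
      ((if g⁻¹ * g' = 1 then N else 0) * ((π g' k : ℂ))⁻¹) • s (g * g') k
      = N • ∑ g : G, ∑ k : G, ((π g k : ℂ))⁻¹ • s (g ^ 2) k := by
    rw [Finset.smul_sum]
    apply Finset.sum_congr rfl
    intro g _
    rw [Finset.sum_eq_single g]
    · rw [Finset.smul_sum]
      apply Finset.sum_congr rfl
      intro k _
      rw [inv_mul_cancel, if_pos rfl, smul_smul, ← sq]
    · intro g' _ hne
      apply Finset.sum_eq_zero
      intro k _
      rw [if_neg, zero_mul, zero_smul]
      rw [inv_mul_eq_one]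
      exact fun h => hne h.symm
    · intro h; exact absurd (Finset.mem_univ g) h
  -- LHS now equals N⁻¹ • ∑ g, ∑ k, (π g k)⁻¹ • s (g²) k
  have lhs_eq : Rcirc G π * Rcirc G π
      = N⁻¹ • ∑ g : G, ∑ k : G, ((π g k : ℂ))⁻¹ • s (g ^ 2) k := by
    rw [e1, Finset.sum_congr rfl
      (fun g _ => Finset.sum_congr rfl (fun g' _ => e2 g g')), e3, smul_smul]
    congr 1
    field_simp
  rw [lhs_eq]
  -- Step 4: reduce the RHS
  have r1 : ∀ e : G, ∑ f : G, ((π e (f ^ 2) : ℂ))⁻¹ • s (e ^ 2) (f ^ 2)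
      = ∑ k ∈ Finset.univ.image (fun g : G => g ^ 2),
          M • (((π e k : ℂ))⁻¹ • s (e ^ 2) k) := by
    intro e
    rw [Finset.sum_comp (fun k => ((π e k : ℂ))⁻¹ • s (e ^ 2) k) (fun f : G => f ^ 2)]
    apply Finset.sum_congr rfl
    intro k hk
    obtain ⟨e₀, _, he₀⟩ := Finset.mem_image.mp hk
    rw [Rc.card_fiber_sq k e₀ he₀, hM, Nat.cast_smul_eq_nsmul]
  have r2 : ∑ g : G, ∑ k : G, ((π g k : ℂ))⁻¹ • s (g ^ 2) k
      = ∑ k ∈ Finset.univ.image (fun g : G => g ^ 2),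
          ∑ g : G, ((π g k : ℂ))⁻¹ • s (g ^ 2) k := by
    rw [Finset.sum_comm]
    symm
    apply Finset.sum_subset (Finset.subset_univ _)
    intro k _ hk
    -- vanishing for non-squares
    rw [← Finset.sum_fiberwise Finset.univ (fun g : G => g ^ 2)
      (fun g => ((π g k : ℂ))⁻¹ • s (g ^ 2) k)]
    apply Finset.sum_eq_zero
    intro c _
    have : ∀ g ∈ Finset.univ.filter (fun g : G => g ^ 2 = c),
        ((π g k : ℂ))⁻¹ • s (g ^ 2) k = ((π g k : ℂ))⁻¹ • s c k := by
      intro g hg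
      simp only [Finset.mem_filter, Finset.mem_univ, true_and] at hg
      rw [hg]
    rw [Finset.sum_congr rfl this, ← Finset.sum_smul,
      Rc.fiber_sum_zero π hmul_left hmul_right hnondeg k hk c, zero_smul]
  rw [r2]
  conv_rhs => rw [Finset.sum_congr rfl
    (fun e (_ : e ∈ (Finset.univ : Finset G)) => r1 e), Finset.sum_comm]
  rw [Finset.smul_sum, Finset.smul_sum]
  apply Finset.sum_congr rfl
  intro k _
  rw [Finset.smul_sum, Finset.smul_sum]
  apply Finset.sum_congr rfl
  intro e _
  rw [smul_smul, smul_smul, smul_smul]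
  congr 1
  field_simp
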